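/- Fix q ≥ 1 and γ ∈ ℝ^q. On a probability space for sample a, let z^a = (z^a_1, …, z^a_q) be square-integrable real random variables and v^a a square-integrable real random variable with the random vector z^a independent of v^a; define x^a = Σ_k γ_k z^a_k + v^a. On a probability space for sample b, let z^b = (z^b_1, …, z^b_q) be square-integrable, u^b, v^b square-integrable, with the random vector z^b independent of the pair (u^b, v^b); for β^b ∈ ℝ define x^b = Σ_k γ_k z^b_k + v^b and y^b = β^b x^b + u^b. Then for every j: Cov(z^a_j, x^a) = Σ_k γ_k Cov(z^a_j, z^a_k) and Cov(z^b_j, y^b) = β^b Σ_k γ_k Cov(z^b_j, z^b_k). Consequently, if the covariance matrices Σ^a = (Cov(z^a_j, z^a_k))_{j,k} and Σ^b = (Cov(z^b_j, z^b_k))_{j,k} are invertible, then (Σ^b)^{-1}(Cov(z^b_j, y^b))_j = β^b γ and (Σ^a)^{-1}(Cov(z^a_j, x^a))_j = γ, so that the population moment function m(β) = (Σ^b)^{-1}(Cov(z^b_j, y^b))_j − (Σ^a)^{-1}(Cov(z^a_j, x^a))_j · β equals γ(β^b − β), which (when γ ≠ 0) vanishes if and only if β = β^b. -/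

import Mathlib

open Matrix MeasureTheory ProbabilityTheory

/-- Covariance of two real random variables. -/
noncomputable def cov {Ωs : Type*} [MeasurableSpace Ωs] (μ : Measure Ωs)
    (X Y : Ωs → ℝ) : ℝ :=
  ∫ ω, (X ω - ∫ ω', X ω' ∂μ) * (Y ω - ∫ ω', Y ω' ∂μ) ∂μ

lemma memL2_integrable_mul {Ω : Type*} [MeasurableSpace Ω] {μ : Measure Ω}
    {f g : Ω → ℝ} (hf : MemLp f 2 μ) (hg : MemLp g 2 μ) :
    Integrable (fun ω => f ω * g ω) μ := by
  have h : MemLp (f • g) 1 μ := hg.smul hf (hpqr := ⟨by rw [inv_one, ENNReal.inv_two_add_inv_two]⟩)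
  rw [memLp_one_iff_integrable] at h
  simp only [smul_eq_mul] at h
  exact h

lemma cov_eq {Ω : Type*} [MeasurableSpace Ω] {μ : Measure Ω} [IsProbabilityMeasure μ]
    {f g : Ω → ℝ} (hf : MemLp f 2 μ) (hg : MemLp g 2 μ) :
    cov μ f g = (∫ ω, f ω * g ω ∂μ) - (∫ ω, f ω ∂μ) * ∫ ω, g ω ∂μ := by
  have hfi : Integrable f μ := hf.integrable one_le_two
  have hgi : Integrable g μ := hg.integrable one_le_two
  have hfg : Integrable (fun ω => f ω * g ω) μ := memL2_integrable_mul hf hg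
  set a := ∫ ω, f ω ∂μ with ha
  set b := ∫ ω, g ω ∂μ with hb
  have key : (fun ω => (f ω - a) * (g ω - b))
      = fun ω => f ω * g ω - (a * g ω + (b * f ω - a * b)) := funext fun ω => by ring
  have i1 : Integrable (fun ω => b * f ω - a * b) μ := (hfi.const_mul b).sub (integrable_const _)
  have i2 : Integrable (fun ω => a * g ω + (b * f ω - a * b)) μ := (hgi.const_mul a).add i1
  show (∫ ω, (f ω - a) * (g ω - b) ∂μ) = _
  rw [key, integral_sub hfg i2, integral_add (hgi.const_mul a) i1,
    integral_sub (hfi.const_mul b) (integrable_const _),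
    integral_const_mul, integral_const_mul, integral_const]
  simp [← ha, ← hb]
  ring

lemma cov_linear_comb {Ω : Type*} [MeasurableSpace Ω] (μ : Measure Ω) [IsProbabilityMeasure μ]
    {q : ℕ} (c : Fin q → ℝ) (z : Fin q → Ω → ℝ) (w : Ω → ℝ)
    (hz : ∀ k, MemLp (z k) 2 μ) (hw : MemLp w 2 μ)
    (hindep : IndepFun (fun ω (k : Fin q) => z k ω) w μ) (j : Fin q) :
    cov μ (z j) (fun ω => (∑ k, c k * z k ω) + w ω) = ∑ k, c k * cov μ (z j) (z k) := by
  have hS : MemLp (fun ω => ∑ k, c k * z k ω) 2 μ :=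
    memLp_finset_sum _ (fun k _ => (hz k).const_mul (c k))
  have hT : MemLp (fun ω => (∑ k, c k * z k ω) + w ω) 2 μ := hS.add hw
  have hjw : IndepFun (z j) w μ := hindep.comp (measurable_pi_apply j) measurable_id
  have hmul : ∫ ω, z j ω * w ω ∂μ = (∫ ω, z j ω ∂μ) * ∫ ω, w ω ∂μ :=
    hjw.integral_fun_mul_eq_mul_integral (hz j).aestronglyMeasurable hw.aestronglyMeasurable
  have e1 : ∫ ω, z j ω * ((∑ k, c k * z k ω) + w ω) ∂μ
      = (∑ k, c k * ∫ ω, z j ω * z k ω ∂μ) + (∫ ω, z j ω ∂μ) * ∫ ω, w ω ∂μ := by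
    have hrw : (fun ω => z j ω * ((∑ k, c k * z k ω) + w ω))
        = fun ω => (∑ k, c k * (z j ω * z k ω)) + z j ω * w ω := funext fun ω => by
      rw [mul_add, Finset.mul_sum]
      congr 1
      exact Finset.sum_congr rfl fun k _ => by ring
    rw [hrw, integral_add (integrable_finset_sum _ fun k _ =>
        (memL2_integrable_mul (hz j) (hz k)).const_mul (c k)) (memL2_integrable_mul (hz j) hw),
      integral_finset_sum _ fun k _ => (memL2_integrable_mul (hz j) (hz k)).const_mul (c k), hmul]
    congr 1
    exact Finset.sum_congr rfl fun k _ => integral_const_mul _ _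
  have e2 : ∫ ω, ((∑ k, c k * z k ω) + w ω) ∂μ
      = (∑ k, c k * ∫ ω, z k ω ∂μ) + ∫ ω, w ω ∂μ := by
    rw [integral_add (integrable_finset_sum _ fun k _ => ((hz k).integrable one_le_two).const_mul (c k))
        (hw.integrable one_le_two),
      integral_finset_sum _ fun k _ => ((hz k).integrable one_le_two).const_mul (c k)]
    congr 1
    exact Finset.sum_congr rfl fun k _ => integral_const_mul _ _
  rw [cov_eq (hz j) hT, e1, e2]
  have e3 : ∑ k, c k * cov μ (z j) (z k)
      = ∑ k, (c k * ∫ ω, z j ω * z k ω ∂μ - (∫ ω, z j ω ∂μ) * (c k * ∫ ω, z k ω ∂μ)) :=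
    Finset.sum_congr rfl fun k _ => by rw [cov_eq (hz j) (hz k)]; ring
  rw [e3, Finset.sum_sub_distrib, ← Finset.mul_sum]
  ring

/-- Population identification in the linear two-sample IV model
(Proposition 1): the population moment function `m(β)` equals `γ(β^b − β)`,
which (for `γ ≠ 0`) vanishes iff `β = β^b`. -/
theorem population_identification_linear_tsiv
    (q : ℕ) (hq : 1 ≤ q) (γ : Fin q → ℝ)
    -- sample a
    {Ωa : Type*} [MeasurableSpace Ωa] (μa : Measure Ωa) [IsProbabilityMeasure μa]
    (za : Fin q → Ωa → ℝ) (va : Ωa → ℝ)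
    (hza2 : ∀ j, MemLp (za j) 2 μa) (hva2 : MemLp va 2 μa)
    (hindepa : IndepFun (fun ω (j : Fin q) => za j ω) va μa)
    (xa : Ωa → ℝ) (hxa : xa = fun ω => (∑ k, γ k * za k ω) + va ω)
    -- sample b
    {Ωb : Type*} [MeasurableSpace Ωb] (μb : Measure Ωb) [IsProbabilityMeasure μb]
    (zb : Fin q → Ωb → ℝ) (ub vb : Ωb → ℝ)
    (hzb2 : ∀ j, MemLp (zb j) 2 μb) (hub2 : MemLp ub 2 μb) (hvb2 : MemLp vb 2 μb)
    (hindepb : IndepFun (fun ω (j : Fin q) => zb j ω) (fun ω => (ub ω, vb ω)) μb)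
    (βb : ℝ)
    (xb : Ωb → ℝ) (hxb : xb = fun ω => (∑ k, γ k * zb k ω) + vb ω)
    (yb : Ωb → ℝ) (hyb : yb = fun ω => βb * xb ω + ub ω)
    -- instrument covariance matrices
    (Sa : Matrix (Fin q) (Fin q) ℝ) (hSa : Sa = Matrix.of fun j k => cov μa (za j) (za k))
    (Sb : Matrix (Fin q) (Fin q) ℝ) (hSb : Sb = Matrix.of fun j k => cov μb (zb j) (zb k))
    -- population moment function
    (m : ℝ → Fin q → ℝ)
    (hm : ∀ β, m β = Sb⁻¹.mulVec (fun j => cov μb (zb j) yb) -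
      β • Sa⁻¹.mulVec (fun j => cov μa (za j) xa)) :
    (∀ j, cov μa (za j) xa = ∑ k, γ k * cov μa (za j) (za k)) ∧
    (∀ j, cov μb (zb j) yb = βb * ∑ k, γ k * cov μb (zb j) (zb k)) ∧
    (IsUnit Sa.det → IsUnit Sb.det →
      Sb⁻¹.mulVec (fun j => cov μb (zb j) yb) = βb • γ ∧
      Sa⁻¹.mulVec (fun j => cov μa (za j) xa) = γ ∧
      (∀ β, m β = (βb - β) • γ) ∧
      (γ ≠ 0 → ∀ β, m β = 0 ↔ β = βb)) := by
  have part1 : ∀ j, cov μa (za j) xa = ∑ k, γ k * cov μa (za j) (za k) := fun j => by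
    rw [hxa]; exact cov_linear_comb μa γ za va hza2 hva2 hindepa j
  have hyb' : yb = fun ω => (∑ k, (βb * γ k) * zb k ω) + (βb * vb ω + ub ω) := by
    subst hyb hxb
    funext ω
    rw [mul_add, Finset.mul_sum]
    have : ∑ k, βb * (γ k * zb k ω) = ∑ k, (βb * γ k) * zb k ω :=
      Finset.sum_congr rfl fun k _ => by ring
    rw [this]; ring
  have hwb2 : MemLp (fun ω => βb * vb ω + ub ω) 2 μb := (hvb2.const_mul βb).add hub2
  have hindep2 : IndepFun (fun ω (k : Fin q) => zb k ω) (fun ω => βb * vb ω + ub ω) μb :=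
    hindepb.comp measurable_id ((measurable_snd.const_mul βb).add measurable_fst)
  have part2 : ∀ j, cov μb (zb j) yb = βb * ∑ k, γ k * cov μb (zb j) (zb k) := fun j => by
    rw [hyb', cov_linear_comb μb (fun k => βb * γ k) zb _ hzb2 hwb2 hindep2 j, Finset.mul_sum]
    exact Finset.sum_congr rfl fun k _ => by ring
  refine ⟨part1, part2, fun hda hdb => ?_⟩
  have hva' : (fun j => cov μa (za j) xa) = Sa.mulVec γ := funext fun j => by
    rw [part1 j, hSa]
    simp only [Matrix.mulVec, dotProduct, Matrix.of_apply]
    exact Finset.sum_congr rfl fun k _ => mul_comm _ _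
  have hA : Sa⁻¹.mulVec (fun j => cov μa (za j) xa) = γ := by
    rw [hva', Matrix.mulVec_mulVec, Matrix.nonsing_inv_mul Sa hda, Matrix.one_mulVec]
  have hvb'' : (fun j => cov μb (zb j) yb) = Sb.mulVec (βb • γ) := funext fun j => by
    rw [part2 j, hSb]
    simp only [Matrix.mulVec, dotProduct, Matrix.of_apply, Pi.smul_apply, smul_eq_mul,
      Finset.mul_sum]
    exact Finset.sum_congr rfl fun k _ => by ring
  have hB : Sb⁻¹.mulVec (fun j => cov μb (zb j) yb) = βb • γ := by
    rw [hvb'', Matrix.mulVec_mulVec, Matrix.nonsing_inv_mul Sb hdb, Matrix.one_mulVec]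
  have hm' : ∀ β, m β = (βb - β) • γ := fun β => by
    rw [hm β, hB, hA, sub_smul]
  refine ⟨hB, hA, hm', fun hγ β => ?_⟩
  rw [hm' β]
  constructor
  · intro h
    rcases smul_eq_zero.mp h with h' | h'
    · linarith [sub_eq_zero.mp h']
    · exact absurd h' hγ
  · rintro rfl
    simp
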